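/- For any 2×2 complex matrix A, the quantity U_A = (tr(A*A))/2 - |tr A|²/4 satisfies U_A ≥ |D_A|, where D_A = det(A) - (tr A)²/4. Moreover, equality U_A = |D_A| holds if and only if A is normal. -/

import Mathlib

open Matrix

noncomputable def UA (A : Matrix (Fin 2) (Fin 2) ℂ) : ℝ :=
  (Matrix.trace (Aᴴ * A)).re / 2 - ‖Matrix.trace A‖ ^ 2 / 4

noncomputable def DA (A : Matrix (Fin 2) (Fin 2) ℂ) : ℂ :=
  A.det - (Matrix.trace A) ^ 2 / 4

open Complex

private lemma key_aux (x b c : ℂ) :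
    ‖x‖^2/4 + (‖b‖^2 + ‖c‖^2)/2 ≥ ‖x^2/4 + b*c‖ ∧
      (‖x‖^2/4 + (‖b‖^2 + ‖c‖^2)/2 = ‖x^2/4 + b*c‖ ↔
        ((starRingEnd ℂ) b * b = (starRingEnd ℂ) c * c ∧
          (starRingEnd ℂ) c * x = b * (starRingEnd ℂ) x)) := by
  set nb := ‖b‖ with hnb
  set nc := ‖c‖ with hnc
  set nx := ‖x‖ with hnx
  set z := x^2*((starRingEnd ℂ) b * (starRingEnd ℂ) c) with hzdef
  have hnb0 : 0 ≤ nb := norm_nonneg b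
  have hnc0 : 0 ≤ nc := norm_nonneg c
  have hnx0 : 0 ≤ nx := norm_nonneg x
  have hsqb : nb^2 = normSq b := Complex.sq_norm b
  have hsqc : nc^2 = normSq c := Complex.sq_norm c
  have hsqx : nx^2 = normSq x := Complex.sq_norm x
  have han : normSq (x^2 + 4*(b*c)) = (nx^2)^2 + 16*nb^2*nc^2 + 8*z.re := by
    rw [hsqb, hsqc, hsqx, hzdef]
    simp only [normSq_apply, Complex.add_re, Complex.add_im, Complex.mul_re, Complex.mul_im,
      Complex.conj_re, Complex.conj_im, pow_two, Complex.re_ofNat, Complex.im_ofNat]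
    ring
  have habsz : ‖z‖ = nx^2 * (nb * nc) := by
    rw [hzdef, hnx, hnb, hnc]; simp [norm_mul, norm_pow, Complex.norm_conj]
  have hzle : z.re ≤ nx^2 * (nb * nc) := habsz ▸ Complex.re_le_norm z
  have habs4 : ‖x^2/4 + b*c‖ = ‖x^2 + 4*(b*c)‖ / 4 := by
    have h : x^2/4 + b*c = (x^2 + 4*(b*c))/4 := by ring
    rw [h, norm_div]; norm_num
  have hbbc : (starRingEnd ℂ) b * b = (normSq b : ℂ) := by rw [mul_comm, Complex.mul_conj]
  have hccc : (starRingEnd ℂ) c * c = (normSq c : ℂ) := by rw [mul_comm, Complex.mul_conj]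
  have hxxc : x * (starRingEnd ℂ) x = (normSq x : ℂ) := Complex.mul_conj x
  have hineq : ‖x^2 + 4*(b*c)‖ ≤ nx^2 + 2*(nb^2 + nc^2) := by
    rw [Complex.norm_def]
    have h1 : normSq (x^2 + 4*(b*c)) ≤ (nx^2 + 2*(nb^2 + nc^2))^2 := by
      rw [han]
      nlinarith [sq_nonneg (nb - nc), sq_nonneg (nb^2 - nc^2),
        mul_nonneg (sq_nonneg nx) (sq_nonneg (nb - nc)), hzle]
    calc Real.sqrt (normSq (x^2 + 4*(b*c))) ≤ Real.sqrt ((nx^2 + 2*(nb^2 + nc^2))^2) :=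
          Real.sqrt_le_sqrt h1
      _ = nx^2 + 2*(nb^2 + nc^2) := Real.sqrt_sq (by positivity)
  constructor
  · rw [habs4]; linarith
  · rw [habs4]
    constructor
    · intro h
      have habsS : ‖x^2 + 4*(b*c)‖ = nx^2 + 2*(nb^2 + nc^2) := by linarith
      have hE : (nx^2)^2 + 16*nb^2*nc^2 + 8*z.re = (nx^2 + 2*(nb^2 + nc^2))^2 := by
        rw [← han, ← Complex.sq_norm, habsS]
      have hbc : nb = nc := by
        have h1 : (nb^2 - nc^2)^2 ≤ 0 := by
          nlinarith [mul_nonneg (sq_nonneg nx) (sq_nonneg (nb - nc)), hzle, hE]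
        have h1z : (nb^2 - nc^2)^2 = 0 := le_antisymm h1 (sq_nonneg _)
        have h2 : nb^2 = nc^2 := by
          have := pow_eq_zero_iff (two_ne_zero) |>.mp h1z
          linarith
        calc nb = Real.sqrt (nb^2) := (Real.sqrt_sq hnb0).symm
          _ = Real.sqrt (nc^2) := by rw [h2]
          _ = nc := Real.sqrt_sq hnc0
      have hE' := hE
      rw [hbc] at hE'
      have hzre : z.re = nx^2 * nc^2 := by linear_combination hE' / 8
      have h2' : normSq z = (nx^2*(nc*nc))^2 := by rw [← Complex.sq_norm, habsz, hbc]
      have h1' : normSq z = z.re^2 + z.im^2 := by rw [normSq_apply]; ring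
      have him2 : z.im^2 = 0 := by
        linear_combination -h1' + h2' - (z.re + nx^2*nc^2)*hzre
      have hzim : z.im = 0 := pow_eq_zero_iff (two_ne_zero) |>.mp him2
      have hz : z = (normSq x : ℂ) * (normSq b : ℂ) := by
        apply Complex.ext
        · rw [← Complex.ofReal_mul, Complex.ofReal_re, hzre, ← hsqx, ← hsqb, hbc]
        · rw [← Complex.ofReal_mul, Complex.ofReal_im, hzim]
      refine ⟨?_, ?_⟩
      · rw [hbbc, hccc]
        have hnsbc : normSq b = normSq c := by rw [← hsqb, ← hsqc, hbc]
        exact_mod_cast hnsbc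
      · by_cases hx : x = 0
        · simp [hx]
        · by_cases hb : b = 0
          · have hc0 : nc = 0 := by rw [← hbc, hnb, hb]; simp
            have hc : c = 0 := norm_eq_zero.mp (by rw [← hnc]; exact hc0)
            simp [hb, hc]
          · have hne : x * (starRingEnd ℂ) b ≠ 0 := by
              apply mul_ne_zero hx
              simpa using hb
            have h0 : ((starRingEnd ℂ) c * x - b * (starRingEnd ℂ) x) * (x * (starRingEnd ℂ) b) = 0 := by
              rw [hzdef] at hz
              linear_combination hz - (normSq x : ℂ) * hbbc - ((starRingEnd ℂ) b * b) * hxxc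
            rcases mul_eq_zero.mp h0 with h' | h'
            · exact sub_eq_zero.mp h'
            · exact absurd h' hne
    · rintro ⟨h1, h2⟩
      have hnsbc : normSq b = normSq c := by
        have h1' := h1
        rw [hbbc, hccc] at h1'
        exact_mod_cast h1'
      have hbc : nb = nc := by
        calc nb = Real.sqrt (nb^2) := (Real.sqrt_sq hnb0).symm
          _ = Real.sqrt (nc^2) := by rw [hsqb, hsqc, hnsbc]
          _ = nc := Real.sqrt_sq hnc0
      have hz : z = (normSq x : ℂ) * (normSq b : ℂ) := by
        rw [hzdef]
        linear_combination ((starRingEnd ℂ) b * x) * h2 + (normSq x : ℂ) * hbbc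
          + (b * (starRingEnd ℂ) b) * hxxc
      have hzre : z.re = nx^2 * nb^2 := by
        rw [hz, ← Complex.ofReal_mul, Complex.ofReal_re, hsqx, hsqb]
      have hns : normSq (x^2 + 4*(b*c)) = (nx^2 + 2*(nb^2 + nc^2))^2 := by
        rw [han, hzre, ← hbc]; ring
      have habsS : ‖x^2 + 4*(b*c)‖ = nx^2 + 2*(nb^2 + nc^2) := by
        rw [Complex.norm_def, hns, Real.sqrt_sq (by positivity)]
      rw [habsS]; ring

private lemma hU_aux (A : Matrix (Fin 2) (Fin 2) ℂ) :
    UA A = ‖A 0 0 - A 1 1‖^2/4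
      + (‖A 0 1‖^2 + ‖A 1 0‖^2)/2 := by
  simp only [UA, Matrix.trace_fin_two, Matrix.mul_apply, Fin.sum_univ_two,
    Matrix.conjTranspose_apply, Complex.sq_norm, Complex.add_re, Complex.normSq_apply,
    Complex.mul_re, Complex.sub_re, Complex.sub_im, Complex.add_im, Complex.star_def,
    Complex.conj_re, Complex.conj_im]
  ring

private lemma hD_aux (A : Matrix (Fin 2) (Fin 2) ℂ) :
    DA A = -((A 0 0 - A 1 1)^2/4 + A 0 1 * A 1 0) := by
  simp only [DA, Matrix.det_fin_two, Matrix.trace_fin_two]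
  ring

private lemma hNormal_aux (A : Matrix (Fin 2) (Fin 2) ℂ) :
    (Aᴴ * A = A * Aᴴ) ↔
      ((starRingEnd ℂ) (A 0 1) * A 0 1 = (starRingEnd ℂ) (A 1 0) * A 1 0 ∧
       (starRingEnd ℂ) (A 1 0) * (A 0 0 - A 1 1) = A 0 1 * (starRingEnd ℂ) (A 0 0 - A 1 1)) := by
  rw [← Matrix.ext_iff]
  constructor
  · intro h
    have h00 := h 0 0
    have h01 := h 0 1
    simp only [Matrix.mul_apply, Fin.sum_univ_two, Matrix.conjTranspose_apply,
      Complex.star_def] at h00 h01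
    constructor
    · linear_combination -h00
    · simp only [map_sub]
      linear_combination -h01
  · rintro ⟨h1, h2⟩ i j
    simp only [map_sub] at h2
    have h2' : A 1 0 * ((starRingEnd ℂ) (A 0 0) - (starRingEnd ℂ) (A 1 1)) =
        (starRingEnd ℂ) (A 0 1) * (A 0 0 - A 1 1) := by
      have := congrArg (starRingEnd ℂ) h2
      simp only [_root_.map_mul, map_sub, Complex.conj_conj] at this
      linear_combination this
    fin_cases i <;> fin_cases j <;>
      simp only [Matrix.mul_apply, Fin.sum_univ_two, Matrix.conjTranspose_apply,
        Complex.star_def, Fin.isValue, Fin.zero_eta, Fin.mk_one]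
    · linear_combination -h1
    · linear_combination -h2
    · linear_combination -h2'
    · linear_combination h1

theorem UA_ge_abs_DA_and_eq_iff_normal (A : Matrix (Fin 2) (Fin 2) ℂ) :
    UA A ≥ ‖DA A‖ ∧
      (UA A = ‖DA A‖ ↔ Aᴴ * A = A * Aᴴ) := by
  have hD : ‖DA A‖ = ‖(A 0 0 - A 1 1)^2/4 + A 0 1 * A 1 0‖ := by
    rw [hD_aux, norm_neg]
  obtain ⟨hkey1, hkey2⟩ := key_aux (A 0 0 - A 1 1) (A 0 1) (A 1 0)
  constructor
  · rw [hD, hU_aux]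
    exact hkey1
  · rw [hD, hU_aux, hNormal_aux]
    exact hkey2
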